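/- Let (P_n), (K1_n), (K2_n) be sequences of natural numbers with K1_n + K2_n ≤ P_n and P_n ≥ 1 for all n, and suppose K1_n·K2_n/P_n → 0 as n → ∞. Then 1 − C(P_n−K1_n, K2_n)/C(P_n, K2_n) is asymptotically equivalent to K1_n·K2_n/P_n, i.e., their ratio tends to 1 (assuming K1_n, K2_n ≥ 1 for all n). -/

import Mathlib

open Filter Finset

/-- `(1-t)^m ≤ 1 - m t + (m t)^2/2` for `0 ≤ t ≤ 1`. -/
lemma aux_pow_le (t : ℝ) (ht0 : 0 ≤ t) (ht1 : t ≤ 1) :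
    ∀ m : ℕ, (1 - t) ^ m ≤ 1 - m * t + (m * t) ^ 2 / 2 := by
  intro m
  induction m with
  | zero => simp
  | succ m ih =>
    have h1t : (0:ℝ) ≤ 1 - t := by linarith
    have h := mul_le_mul_of_nonneg_right ih h1t
    have hpow : (1 - t) ^ (m + 1) = (1 - t) ^ m * (1 - t) := by ring
    rw [hpow]
    push_cast
    have hm : (0:ℝ) ≤ (m:ℝ) := Nat.cast_nonneg m
    nlinarith [sq_nonneg t, sq_nonneg ((m:ℝ) * t), mul_nonneg hm ht0,
      mul_nonneg (mul_nonneg (mul_nonneg hm hm) ht0) (mul_nonneg ht0 ht0),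
      mul_nonneg (mul_nonneg hm ht0) ht0]

/-- Bounds on the ratio of descending factorials, stated as product bounds. -/
lemma desc_bounds (p k1 k2 : ℕ) (hle : k1 + k2 ≤ p) (h1 : 1 ≤ k1) (h2 : 1 ≤ k2) :
    (1 - (k1:ℝ)/((p:ℝ) - k2 + 1)) ^ k2 * (p.descFactorial k2 : ℝ)
      ≤ ((p - k1).descFactorial k2 : ℝ) ∧
    ((p - k1).descFactorial k2 : ℝ) ≤ (1 - (k1:ℝ)/p) ^ k2 * (p.descFactorial k2 : ℝ) := by
  have hk1R : (1:ℝ) ≤ (k1:ℝ) := by exact_mod_cast h1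
  have hk2R : (1:ℝ) ≤ (k2:ℝ) := by exact_mod_cast h2
  have hleR : (k1:ℝ) + k2 ≤ p := by exact_mod_cast hle
  have hqpos : (0:ℝ) < p := by linarith
  have hdpos : (0:ℝ) < (p:ℝ) - k2 + 1 := by linarith
  have hk1d : (k1:ℝ) ≤ (p:ℝ) - k2 + 1 := by linarith
  have hD2 : (p.descFactorial k2 : ℝ) = ∏ i ∈ range k2, ((p:ℝ) - i) := by
    rw [Nat.descFactorial_eq_prod_range, Nat.cast_prod]
    refine Finset.prod_congr rfl fun i hi => ?_
    have hi' : i < k2 := Finset.mem_range.mp hi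
    have : i ≤ p := le_trans (le_of_lt (lt_of_lt_of_le hi' (by omega))) (le_refl p)
    rw [Nat.cast_sub this]
  have hD1 : ((p - k1).descFactorial k2 : ℝ) = ∏ i ∈ range k2, ((p:ℝ) - k1 - i) := by
    rw [Nat.descFactorial_eq_prod_range, Nat.cast_prod]
    refine Finset.prod_congr rfl fun i hi => ?_
    have hi' : i < k2 := Finset.mem_range.mp hi
    have h1' : i ≤ p - k1 := by omega
    have h2' : k1 ≤ p := by omega
    rw [Nat.cast_sub h1', Nat.cast_sub h2']
  constructor
  · rw [hD1, hD2]
    have hprod : (1 - (k1:ℝ)/((p:ℝ) - k2 + 1)) ^ k2 * ∏ i ∈ range k2, ((p:ℝ) - i)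
        = ∏ i ∈ range k2, ((1 - (k1:ℝ)/((p:ℝ) - k2 + 1)) * ((p:ℝ) - i)) := by
      rw [Finset.prod_mul_distrib, Finset.prod_const, Finset.card_range]
    rw [hprod]
    refine Finset.prod_le_prod (fun i hi => ?_) (fun i hi => ?_)
    · have hi' : i < k2 := Finset.mem_range.mp hi
      have hiR : (i:ℝ) + 1 ≤ k2 := by exact_mod_cast hi'
      have hc : (0:ℝ) ≤ 1 - (k1:ℝ)/((p:ℝ) - k2 + 1) := by
        rw [sub_nonneg, div_le_one hdpos]; exact hk1d
      have : (0:ℝ) ≤ (p:ℝ) - i := by linarith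
      exact mul_nonneg hc this
    · have hi' : i < k2 := Finset.mem_range.mp hi
      have hiR : (i:ℝ) + 1 ≤ k2 := by exact_mod_cast hi'
      have hiR0 : (0:ℝ) ≤ i := Nat.cast_nonneg i
      have key : (1 - (k1:ℝ)/((p:ℝ) - k2 + 1)) = ((p:ℝ) - k2 + 1 - k1)/((p:ℝ) - k2 + 1) := by
        field_simp
      rw [key, div_mul_eq_mul_div, div_le_iff₀ hdpos]
      nlinarith [mul_nonneg (by linarith : (0:ℝ) ≤ (k1:ℝ)) (by linarith : (0:ℝ) ≤ (k2:ℝ) - 1 - i)]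
  · rw [hD1, hD2]
    have hprod : (1 - (k1:ℝ)/p) ^ k2 * ∏ i ∈ range k2, ((p:ℝ) - i)
        = ∏ i ∈ range k2, ((1 - (k1:ℝ)/p) * ((p:ℝ) - i)) := by
      rw [Finset.prod_mul_distrib, Finset.prod_const, Finset.card_range]
    rw [hprod]
    refine Finset.prod_le_prod (fun i hi => ?_) (fun i hi => ?_)
    · have hi' : i < k2 := Finset.mem_range.mp hi
      have hiR : (i:ℝ) + 1 ≤ k2 := by exact_mod_cast hi'
      linarith
    · have hi' : i < k2 := Finset.mem_range.mp hi
      have hiR : (i:ℝ) + 1 ≤ k2 := by exact_mod_cast hi'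
      have hiR0 : (0:ℝ) ≤ i := Nat.cast_nonneg i
      have key : (1 - (k1:ℝ)/p) = ((p:ℝ) - k1)/p := by field_simp
      rw [key, div_mul_eq_mul_div, le_div_iff₀ hqpos]
      nlinarith [mul_nonneg (by linarith : (0:ℝ) ≤ (k1:ℝ)) hiR0]

/-- Bounds on the ratio of binomial coefficients. -/
lemma choose_bounds (p k1 k2 : ℕ) (hle : k1 + k2 ≤ p) (h1 : 1 ≤ k1) (h2 : 1 ≤ k2) :
    (1 - (k1:ℝ)/((p:ℝ) - k2 + 1)) ^ k2 ≤ ((p - k1).choose k2 : ℝ) / (p.choose k2) ∧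
    ((p - k1).choose k2 : ℝ) / (p.choose k2) ≤ (1 - (k1:ℝ)/p) ^ k2 := by
  obtain ⟨hlow, hhigh⟩ := desc_bounds p k1 k2 hle h1 h2
  have hcp : 0 < p.choose k2 := Nat.choose_pos (by omega)
  have hcpR : (0:ℝ) < (p.choose k2 : ℝ) := by exact_mod_cast hcp
  have hfac : (0:ℝ) < (k2.factorial : ℝ) := by exact_mod_cast k2.factorial_pos
  have e1 : ((p - k1).descFactorial k2 : ℝ) = (k2.factorial : ℝ) * ((p - k1).choose k2 : ℝ) := by
    exact_mod_cast congrArg (Nat.cast (R := ℝ)) (Nat.descFactorial_eq_factorial_mul_choose _ _)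
  have e2 : (p.descFactorial k2 : ℝ) = (k2.factorial : ℝ) * (p.choose k2 : ℝ) := by
    exact_mod_cast congrArg (Nat.cast (R := ℝ)) (Nat.descFactorial_eq_factorial_mul_choose _ _)
  rw [e1, e2] at hlow hhigh
  constructor
  · rw [le_div_iff₀ hcpR]
    have := (mul_le_mul_iff_right₀ hfac).mp (by linarith : (k2.factorial : ℝ) *
        ((1 - (k1:ℝ)/((p:ℝ) - k2 + 1)) ^ k2 * (p.choose k2 : ℝ)) ≤
        (k2.factorial : ℝ) * ((p - k1).choose k2 : ℝ))
    linarith [this]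
  · rw [div_le_iff₀ hcpR]
    have := (mul_le_mul_iff_right₀ hfac).mp (by linarith : (k2.factorial : ℝ) *
        ((p - k1).choose k2 : ℝ) ≤ (k2.factorial : ℝ) *
        ((1 - (k1:ℝ)/p) ^ k2 * (p.choose k2 : ℝ)))
    linarith [this]

theorem stmt_6 (P K1 K2 : ℕ → ℕ)
    (hle : ∀ n, K1 n + K2 n ≤ P n) (hP : ∀ n, 1 ≤ P n)
    (hK1 : ∀ n, 1 ≤ K1 n) (hK2 : ∀ n, 1 ≤ K2 n)
    (h0 : Filter.Tendsto (fun n => (K1 n : ℝ) * K2 n / P n) Filter.atTop (nhds 0)) :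
    Filter.Tendsto
      (fun n => (1 - (Nat.choose (P n - K1 n) (K2 n) : ℝ) / (Nat.choose (P n) (K2 n)))
        / ((K1 n : ℝ) * K2 n / P n)) Filter.atTop (nhds 1) := by
  set x : ℕ → ℝ := fun n => (K1 n : ℝ) * K2 n / P n with hx_def
  -- basic positivity facts, for each n
  have hk1R : ∀ n, (1:ℝ) ≤ (K1 n : ℝ) := fun n => by exact_mod_cast hK1 n
  have hk2R : ∀ n, (1:ℝ) ≤ (K2 n : ℝ) := fun n => by exact_mod_cast hK2 n
  have hleR : ∀ n, (K1 n : ℝ) + K2 n ≤ P n := fun n => by exact_mod_cast hle n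
  have hqpos : ∀ n, (0:ℝ) < (P n : ℝ) := fun n => by have := hk1R n; have := hk2R n; linarith [hleR n]
  have hdpos : ∀ n, (0:ℝ) < (P n : ℝ) - K2 n + 1 := fun n => by linarith [hleR n, hk1R n]
  have hxpos : ∀ n, 0 < x n := fun n => by
    have h1 := hk1R n; have h2 := hk2R n
    exact div_pos (mul_pos (by linarith) (by linarith)) (hqpos n)
  -- squeeze: 1/P and K2/P tend to 0
  have hinvP : Tendsto (fun n => 1 / (P n : ℝ)) atTop (nhds 0) := by
    refine tendsto_of_tendsto_of_tendsto_of_le_of_le tendsto_const_nhds h0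
      (fun n => by positivity) (fun n => ?_)
    have h1 : (1:ℝ) ≤ (K1 n : ℝ) * K2 n := by nlinarith [hk1R n, hk2R n]
    exact (div_le_div_iff_of_pos_right (hqpos n)).mpr h1
  have hK2P : Tendsto (fun n => (K2 n : ℝ) / P n) atTop (nhds 0) := by
    refine tendsto_of_tendsto_of_tendsto_of_le_of_le tendsto_const_nhds h0
      (fun n => by positivity) (fun n => ?_)
    have h1 : (K2 n : ℝ) ≤ (K1 n : ℝ) * K2 n := by nlinarith [hk1R n, hk2R n]
    exact (div_le_div_iff_of_pos_right (hqpos n)).mpr h1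
  -- the upper comparison function tends to 1
  have hhi : Tendsto (fun n => (P n : ℝ) / ((P n : ℝ) - K2 n + 1)) atTop (nhds 1) := by
    have h1 : Tendsto (fun n => ((P n : ℝ) - K2 n + 1) / P n) atTop (nhds 1) := by
      have heq : (fun n => ((P n : ℝ) - K2 n + 1) / P n)
          = fun n => 1 - (K2 n : ℝ) / P n + 1 / P n := by
        funext n
        have hq : ((P n : ℝ)) ≠ 0 := (hqpos n).ne'
        field_simp
      rw [heq]
      have := ((tendsto_const_nhds : Tendsto (fun _ : ℕ => (1:ℝ)) atTop (nhds 1)).sub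
        hK2P).add hinvP
      simpa using this
    have h2 := h1.inv₀ one_ne_zero
    have heq : (fun n => (((P n : ℝ) - K2 n + 1) / P n)⁻¹)
        = fun n => (P n : ℝ) / ((P n : ℝ) - K2 n + 1) := by
      funext n; rw [inv_div]
    rw [heq] at h2
    rw [inv_one] at h2
    exact h2
  -- the lower comparison function tends to 1
  have hlo : Tendsto (fun n => 1 - x n / 2) atTop (nhds 1) := by
    have := (tendsto_const_nhds : Tendsto (fun _ : ℕ => (1:ℝ)) atTop (nhds 1)).sub
      (h0.div_const 2)
    simpa using this
  refine tendsto_of_tendsto_of_tendsto_of_le_of_le hlo hhi (fun n => ?_) (fun n => ?_)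
  · -- lower bound
    have hxn : x n = (K1 n : ℝ) * K2 n / P n := rfl
    rw [← hxn]
    obtain ⟨_, hub⟩ := choose_bounds (P n) (K1 n) (K2 n) (hle n) (hK1 n) (hK2 n)
    have ht0 : (0:ℝ) ≤ (K1 n : ℝ) / P n := by positivity
    have ht1 : (K1 n : ℝ) / P n ≤ 1 := by
      rw [div_le_one (hqpos n)]; linarith [hleR n, hk2R n]
    have hp := aux_pow_le ((K1 n : ℝ) / P n) ht0 ht1 (K2 n)
    have hR : (Nat.choose (P n - K1 n) (K2 n) : ℝ) / (Nat.choose (P n) (K2 n))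
        ≤ 1 - x n + (x n) ^ 2 / 2 := by
      have hxe : (K2 n : ℝ) * ((K1 n : ℝ) / P n) = x n := by
        rw [hx_def]; ring
      calc (Nat.choose (P n - K1 n) (K2 n) : ℝ) / (Nat.choose (P n) (K2 n))
          ≤ (1 - (K1 n : ℝ) / P n) ^ (K2 n) := hub
        _ ≤ 1 - (K2 n : ℝ) * ((K1 n : ℝ) / P n)
            + ((K2 n : ℝ) * ((K1 n : ℝ) / P n)) ^ 2 / 2 := hp
        _ = 1 - x n + (x n) ^ 2 / 2 := by rw [hxe]
    have hnum : x n - (x n) ^ 2 / 2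
        ≤ 1 - (Nat.choose (P n - K1 n) (K2 n) : ℝ) / (Nat.choose (P n) (K2 n)) := by
      linarith
    have := (div_le_div_iff_of_pos_right (hxpos n)).mpr hnum
    have heq : (x n - (x n) ^ 2 / 2) / x n = 1 - x n / 2 := by
      field_simp [(hxpos n).ne']
    linarith [heq ▸ this]
  · -- upper bound
    have hxn : x n = (K1 n : ℝ) * K2 n / P n := rfl
    rw [← hxn]
    obtain ⟨hlb, _⟩ := choose_bounds (P n) (K1 n) (K2 n) (hle n) (hK1 n) (hK2 n)
    have hs1 : (K1 n : ℝ) / ((P n : ℝ) - K2 n + 1) ≤ 1 := by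
      rw [div_le_one (hdpos n)]; linarith [hleR n]
    have hbern : 1 + (K2 n : ℝ) * (-((K1 n : ℝ) / ((P n : ℝ) - K2 n + 1)))
        ≤ (1 + -((K1 n : ℝ) / ((P n : ℝ) - K2 n + 1))) ^ (K2 n) := by
      apply one_add_mul_le_pow
      have : (0:ℝ) ≤ (K1 n : ℝ) / ((P n : ℝ) - K2 n + 1) :=
        div_nonneg (by positivity) (le_of_lt (hdpos n))
      linarith
    have hR : 1 - (K2 n : ℝ) * ((K1 n : ℝ) / ((P n : ℝ) - K2 n + 1))
        ≤ (Nat.choose (P n - K1 n) (K2 n) : ℝ) / (Nat.choose (P n) (K2 n)) := by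
      calc 1 - (K2 n : ℝ) * ((K1 n : ℝ) / ((P n : ℝ) - K2 n + 1))
          = 1 + (K2 n : ℝ) * (-((K1 n : ℝ) / ((P n : ℝ) - K2 n + 1))) := by ring
        _ ≤ (1 + -((K1 n : ℝ) / ((P n : ℝ) - K2 n + 1))) ^ (K2 n) := hbern
        _ = (1 - (K1 n : ℝ) / ((P n : ℝ) - K2 n + 1)) ^ (K2 n) := by ring_nf
        _ ≤ _ := hlb
    have hnum : 1 - (Nat.choose (P n - K1 n) (K2 n) : ℝ) / (Nat.choose (P n) (K2 n))
        ≤ (K2 n : ℝ) * ((K1 n : ℝ) / ((P n : ℝ) - K2 n + 1)) := by linarith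
    have hstep := (div_le_div_iff_of_pos_right (hxpos n)).mpr hnum
    have heq : ((K2 n : ℝ) * ((K1 n : ℝ) / ((P n : ℝ) - K2 n + 1))) / x n
        = (P n : ℝ) / ((P n : ℝ) - K2 n + 1) := by
      have h1 : (K1 n : ℝ) ≠ 0 := by linarith [hk1R n]
      have h2 : (K2 n : ℝ) ≠ 0 := by linarith [hk2R n]
      have hd : ((P n : ℝ) - K2 n + 1) ≠ 0 := (hdpos n).ne'
      have hq : ((P n : ℝ)) ≠ 0 := (hqpos n).ne'
      rw [hx_def]
      field_simp
    linarith [heq ▸ hstep]
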